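/- arXiv:2511.16638 — 5 statements merged into one kernel-verified Lean document; each statement's English description precedes it below -/
import Mathlib

section
/- For any a ∈ F, the linear map r : H_n → H_n defined by r(X) = a·X_{1,2}·e_{1,n-1} + a·X_{n-1,n}·e_{2,n} is a commuting map, i.e., r(X)·X = X·r(X) for all X ∈ H_n. -/
open Matrix

/-- `X` belongs to the Heisenberg algebra `H_n`: its only possibly nonzero entries lie
in the first row strictly above the diagonal or the last column strictly above the diagonal
(0-based indices: row 0 with column ≠ 0, or column `n-1` with row ≠ `n-1`). -/
def IsHeis {n : ℕ} {F : Type*} [Field F] (X : Matrix (Fin n) (Fin n) F) : Prop :=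
  ∀ i j : Fin n, ¬ ((i.val = 0 ∧ j.val ≠ 0) ∨ (j.val = n - 1 ∧ i.val ≠ n - 1)) → X i j = 0

/-- Anti-transpose: `(antiT X) i j = X (rev j) (rev i)`. -/
def antiT {n : ℕ} {F : Type*} [Field F] (X : Matrix (Fin n) (Fin n) F) :
    Matrix (Fin n) (Fin n) F :=
  Matrix.of fun i j => X j.rev i.rev

/-- `A ∈ C_n`: first and last rows and columns of `A` are zero. -/
def IsC {n : ℕ} {F : Type*} [Field F] (A : Matrix (Fin n) (Fin n) F) : Prop :=
  ∀ i j : Fin n, (i.val = 0 ∨ i.val = n - 1 ∨ j.val = 0 ∨ j.val = n - 1) → A i j = 0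

/-- `A ∈ P_n`: hollow skew-persymmetric matrices in `C_n`. -/
def IsP {n : ℕ} {F : Type*} [Field F] (A : Matrix (Fin n) (Fin n) F) : Prop :=
  IsC A ∧ (∀ i j : Fin n, antiT A i j = - A i j) ∧ (∀ i : Fin n, A i i.rev = 0)

theorem stmt2 {n : ℕ} (hn : 3 ≤ n) {F : Type*} [Field F] (a : F)
    (r : Matrix (Fin n) (Fin n) F → Matrix (Fin n) (Fin n) F)
    (hr : ∀ X, r X =
        (a * X ⟨0, by omega⟩ ⟨1, by omega⟩) •
          Matrix.single ⟨0, by omega⟩ ⟨n - 2, by omega⟩ (1 : F)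
      + (a * X ⟨n - 2, by omega⟩ ⟨n - 1, by omega⟩) •
          Matrix.single ⟨1, by omega⟩ ⟨n - 1, by omega⟩ (1 : F)) :
    ∀ X, IsHeis X → r X * X = X * r X := by
  intro X hX
  have h1 : ∀ j : Fin n, X ⟨n - 1, by omega⟩ j = 0 := fun j =>
    hX _ _ (by rintro (⟨h, _⟩ | ⟨_, h⟩) <;> simp at h <;> omega)
  have h2 : ∀ i : Fin n, X i ⟨0, by omega⟩ = 0 := fun i =>
    hX _ _ (by rintro (⟨_, h⟩ | ⟨h, _⟩) <;> simp at h <;> omega)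
  have h3 : ∀ j : Fin n, j.val ≠ n - 1 → X ⟨n - 2, by omega⟩ j = 0 := fun j hj =>
    hX _ _ (by
      rintro (⟨h, _⟩ | ⟨h, _⟩)
      · simp at h; omega
      · exact hj h)
  have h4 : ∀ i : Fin n, i.val ≠ 0 → X i ⟨1, by omega⟩ = 0 := fun i hi =>
    hX _ _ (by
      rintro (⟨h, _⟩ | ⟨h, _⟩)
      · exact hi h
      · simp at h; omega)
  have z1 : X ⟨n - 2, by omega⟩ ⟨n - 2, by omega⟩ = 0 := h3 _ (by show n - 2 ≠ n - 1; omega)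
  have z4 : X ⟨1, by omega⟩ ⟨1, by omega⟩ = 0 := h4 _ (by show 1 ≠ 0; omega)
  have z5 : X ⟨0, by omega⟩ ⟨0, by omega⟩ = 0 := h2 _
  ext i j
  have L : ∀ p q : Fin n, (Matrix.single p q (1 : F) * X) i j =
      if i = p then X q j else 0 := by
    intro p q
    rcases eq_or_ne i p with h | h
    · subst h; simp
    · simp [h]
  have R : ∀ p q : Fin n, (X * Matrix.single p q (1 : F)) i j =
      if j = q then X i p else 0 := by
    intro p q
    rcases eq_or_ne j q with h | h
    · subst h; simp
    · simp [h]
  rw [hr, add_mul, mul_add, Matrix.smul_mul, Matrix.mul_smul, Matrix.smul_mul,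
    Matrix.mul_smul, Matrix.add_apply, Matrix.add_apply, Matrix.smul_apply,
    Matrix.smul_apply, Matrix.smul_apply, Matrix.smul_apply, L, L, R, R]
  split_ifs <;> subst_vars <;>
    (try simp_all [Fin.ext_iff, smul_eq_mul]) <;>
    (try ring) <;>
    omega
end

section
/- Given scalars a_1, …, a_{n-1} ∈ F, the linear map g : H_n → H_n that sends X to the matrix with (1,j)-entry a_{j-1}·X_{1,j} for 2 ≤ j ≤ n and (i,n)-entry a_{i-1}·X_{i,n} for 2 ≤ i ≤ n−1 (all other entries zero) is a commuting map: g(X)X = Xg(X) for all X ∈ H_n. -/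
open Matrix

theorem stmt3 {n : ℕ} (hn : 3 ≤ n) {F : Type*} [Field F] (a : ℕ → F)
    (g : Matrix (Fin n) (Fin n) F → Matrix (Fin n) (Fin n) F)
    (hg : ∀ X, g X = Matrix.of fun i j : Fin n =>
        if i.val = 0 ∧ j.val ≠ 0 then a j.val * X i j
        else if j.val = n - 1 ∧ i.val ≠ 0 ∧ i.val ≠ n - 1 then a i.val * X i j
        else 0) :
    ∀ X, IsHeis X → g X * X = X * g X := by
  intro X hX
  have h1 : (0 : ℕ) ≠ n - 1 := by omega
  ext i j
  rw [Matrix.mul_apply, Matrix.mul_apply]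
  refine Finset.sum_congr rfl fun k _ => ?_
  simp only [hg, Matrix.of_apply]
  by_cases hi : i.val = 0
  · by_cases hk : k.val = 0
    · have hXik : X i k = 0 := hX i k (by simp [hi, hk])
      simp [hi, hk, hXik, h1.symm]
    · by_cases hj : j.val = n - 1 ∧ k.val ≠ n - 1
      · simp [hi, hk, hj.1, hj.2]
        ring
      · have hXkj : X k j = 0 := hX k j (by tauto)
        simp [hi, hk, hXkj]
  · by_cases hk : k.val = n - 1 ∧ i.val ≠ n - 1
    · have hXkj : X k j = 0 := hX k j (by simp [hk.1]; omega)
      simp [hi, hk.1, hXkj, h1.symm]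
    · have hXik : X i k = 0 := hX i k (by tauto)
      by_cases hk2 : k.val = n - 1 ∧ i.val ≠ 0 ∧ i.val ≠ n - 1
      · exact absurd ⟨hk2.1, hk2.2.2⟩ hk
      · simp [hi, hk2, hXik]
end

section
/- For any matrix B ∈ P_n (hollow skew-persymmetric matrix in C_n), the map X ↦ X^τ B is a commuting map on H_n: (X^τ B)X − X(X^τ B) = 0 for all X ∈ H_n, where X^τ denotes the anti-transpose (X^τ)_{i,j} = X_{n-j+1, n-i+1}. -/
open Matrix

theorem stmt6 {n : ℕ} (hn : 3 ≤ n) {F : Type*} [Field F] [CharZero F]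
    (B : Matrix (Fin n) (Fin n) F) (hB : IsP B) :
    ∀ X, IsHeis X → (antiT X * B) * X = X * (antiT X * B) := by
  obtain ⟨hC, hskew, -⟩ := hB
  intro X hX
  -- column 0 of X is zero
  have hX0 : ∀ k j : Fin n, j.val = 0 → X k j = 0 := by
    intro k j hj
    apply hX
    rintro (⟨-, h2⟩ | ⟨h1, -⟩)
    · exact h2 hj
    · omega
  -- rows of antiT X * B other than row 0 vanish
  have hM : ∀ i k : Fin n, i.val ≠ 0 → (antiT X * B) i k = 0 := by
    intro i k hi
    rw [Matrix.mul_apply]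
    apply Finset.sum_eq_zero
    intro l _
    rcases Nat.eq_zero_or_pos l.val with hl | hl
    · rw [hC l k (Or.inl hl), mul_zero]
    rcases eq_or_ne l.val (n-1) with hl' | hl'
    · rw [hC l k (Or.inr (Or.inl hl')), mul_zero]
    have : antiT X i l = 0 := by
      apply hX
      rintro (⟨h1, -⟩ | ⟨h1, -⟩)
      · simp [Fin.val_rev] at h1; omega
      · simp [Fin.val_rev] at h1; omega
    rw [this, zero_mul]
  -- columns 0 and n-1 of antiT X * B vanish
  have hMc : ∀ i k : Fin n, (k.val = 0 ∨ k.val = n - 1) → (antiT X * B) i k = 0 := by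
    intro i k hk
    rw [Matrix.mul_apply]
    apply Finset.sum_eq_zero
    intro l _
    rcases hk with hk | hk
    · rw [hC l k (Or.inr (Or.inr (Or.inl hk))), mul_zero]
    · rw [hC l k (Or.inr (Or.inr (Or.inr hk))), mul_zero]
  ext i j
  rw [Matrix.mul_apply, Matrix.mul_apply]
  -- RHS is zero
  have rhs0 : ∑ k, X i k * (antiT X * B) k j = 0 := by
    apply Finset.sum_eq_zero
    intro k _
    rcases Nat.eq_zero_or_pos k.val with hk | hk
    · rw [hX0 i k hk, zero_mul]
    · rw [hM k j (by omega), mul_zero]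
  rw [rhs0]
  rcases ne_or_eq i.val 0 with hi | hi
  · apply Finset.sum_eq_zero
    intro k _
    rw [hM i k hi, zero_mul]
  rcases ne_or_eq j.val (n-1) with hj | hj
  · apply Finset.sum_eq_zero
    intro k _
    rcases Nat.eq_zero_or_pos k.val with hk | hk
    · rw [hMc i k (Or.inl hk), zero_mul]
    · rw [hX k j (by rintro (⟨h1,-⟩|⟨h1,-⟩) <;> omega), mul_zero]
  -- main case: i = 0, j = n-1
  have hirev : i.rev = j := by
    ext
    simp [Fin.val_rev]
    omega
  set v : Fin n → F := fun m => X m j with hv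
  have hMe : ∀ k : Fin n, (antiT X * B) i k = ∑ l, v l.rev * B l k := by
    intro k
    rw [Matrix.mul_apply]
    congr 1
    ext l
    simp [antiT, hirev, hv]
  calc ∑ k, (antiT X * B) i k * X k j
      = ∑ k, ∑ l, v l.rev * B l k * v k := by
        refine Finset.sum_congr rfl fun k _ => ?_
        rw [hMe k, Finset.sum_mul]
    _ = 0 := by
        set Q := ∑ k : Fin n, ∑ l : Fin n, v l.rev * B l k * v k with hQdef
        have hB' : ∀ k l : Fin n, B l.rev k.rev = - B k l := by
          intro k l
          have := hskew k l
          simpa [antiT] using this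
        have hQ : Q = -Q := by
          have e1 : Q = ∑ k : Fin n, ∑ l : Fin n, v l.rev.rev * B l.rev k.rev * v k.rev := by
            rw [hQdef]
            rw [← Equiv.sum_comp (Fin.revPerm) (fun k => ∑ l : Fin n, v l.rev * B l k * v k)]
            refine Finset.sum_congr rfl fun k _ => ?_
            rw [← Equiv.sum_comp (Fin.revPerm) (fun l => v l.rev * B l (Fin.revPerm k) * v (Fin.revPerm k))]
            rfl
          have e2 : ∀ k l : Fin n, v l.rev.rev * B l.rev k.rev * v k.rev
              = -(v l * B k l * v k.rev) := by
            intro k l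
            rw [hB' k l, Fin.rev_rev]
            ring
          calc Q = ∑ k : Fin n, ∑ l : Fin n, v l.rev.rev * B l.rev k.rev * v k.rev := e1
            _ = ∑ k : Fin n, ∑ l : Fin n, -(v l * B k l * v k.rev) :=
                Finset.sum_congr rfl fun k _ => Finset.sum_congr rfl fun l _ => e2 k l
            _ = -∑ k : Fin n, ∑ l : Fin n, v l * B k l * v k.rev := by
                simp only [Finset.sum_neg_distrib]
            _ = -Q := by
                rw [hQdef]
                congr 1
                rw [Finset.sum_comm]
                exact Finset.sum_congr rfl fun k _ => Finset.sum_congr rfl fun l _ => by ring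
        have h2Q : (2 : F) * Q = 0 := by linear_combination hQ
        exact (mul_eq_zero.mp h2Q).resolve_left two_ne_zero
end

section
/- For any matrix C ∈ P_n (hollow skew-persymmetric matrix in C_n), the map X ↦ C X^τ is a commuting map on H_n: (C X^τ)X − X(C X^τ) = 0 for all X ∈ H_n. -/
open Matrix

theorem stmt7 {n : ℕ} (hn : 3 ≤ n) {F : Type*} [Field F] [CharZero F]
    (C : Matrix (Fin n) (Fin n) F) (hC : IsP C) :
    ∀ X, IsHeis X → (C * antiT X) * X = X * (C * antiT X) := by
  intro X hX
  obtain ⟨hCc, hskew, hdiag⟩ := hC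
  have hskew' : ∀ i j : Fin n, C j.rev i.rev = - C i j := by
    intro i j
    have := hskew i j
    simpa [antiT] using this
  ext i j
  have hL : ((C * antiT X) * X) i j = 0 := by
    rw [Matrix.mul_apply]
    apply Finset.sum_eq_zero
    intro k _
    by_cases hk : X k j = 0
    · rw [hk, mul_zero]
    · have hcond : (k.val = 0 ∧ j.val ≠ 0) ∨ (j.val = n - 1 ∧ k.val ≠ n - 1) := by
        by_contra h; exact hk (hX k j h)
      have hrevk : k.rev.val ≠ 0 := by
        have hk1 := k.isLt
        rcases hcond with ⟨h1, _⟩ | ⟨_, h2⟩ <;> (rw [Fin.val_rev]; omega)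
      have hz : (C * antiT X) i k = 0 := by
        rw [Matrix.mul_apply]
        apply Finset.sum_eq_zero
        intro m _
        by_cases hm : C i m = 0
        · rw [hm, zero_mul]
        · have hm0 : m.val ≠ 0 ∧ m.val ≠ n - 1 := by
            constructor <;> (intro h; exact hm (hCc i m (by tauto)))
          have hz2 : antiT X m k = 0 := by
            show X k.rev m.rev = 0
            apply hX
            rintro (⟨h1, _⟩ | ⟨h2, _⟩)
            · exact hrevk h1
            · rw [Fin.val_rev] at h2
              have := m.isLt
              omega
          rw [hz2, mul_zero]
      rw [hz, zero_mul]
  have hR : (X * (C * antiT X)) i j = 0 := by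
    by_cases hhard : i.val = 0 ∧ j.val = n - 1
    · -- hard case
      obtain ⟨hi0, hjn⟩ := hhard
      have hji : j.rev = i := by
        apply Fin.ext
        rw [Fin.val_rev, hjn, hi0]
        omega
      simp only [Matrix.mul_apply, Finset.mul_sum, antiT, Matrix.of_apply, hji]
      -- goal : ∑ k, ∑ m, X i k * (C k m * X i m.rev) = 0
      have step1 : ∀ k : Fin n, ∑ m, X i k * (C k m * X i m.rev)
          = ∑ m, X i k * (C k m.rev * X i m) := by
        intro k
        rw [← Equiv.sum_comp (Fin.revPerm) (fun m => X i k * (C k m.rev * X i m))]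
        simp [Fin.rev_rev]
      rw [Finset.sum_congr rfl (fun k _ => step1 k)]
      set S := ∑ k, ∑ m, X i k * (C k m.rev * X i m) with hS
      have hswap : S = ∑ m, ∑ k, X i k * (C k m.rev * X i m) := by
        rw [hS, Finset.sum_comm]
      have hneg : S = -S := by
        nth_rewrite 2 [hswap]
        rw [← Finset.sum_neg_distrib]
        apply Finset.sum_congr rfl
        intro k _
        rw [← Finset.sum_neg_distrib]
        apply Finset.sum_congr rfl
        intro m _
        have : C m k.rev = - C k m.rev := by
          have h := hskew' k m.rev
          rwa [Fin.rev_rev] at h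
        rw [this]
        ring
      have h2 : (2 : F) * S = 0 := by linear_combination hneg
      exact (mul_eq_zero.mp h2).resolve_left two_ne_zero
    · rw [Matrix.mul_apply]
      apply Finset.sum_eq_zero
      intro k _
      by_cases hk : X i k = 0
      · rw [hk, zero_mul]
      · have hcond : (i.val = 0 ∧ k.val ≠ 0) ∨ (k.val = n - 1 ∧ i.val ≠ n - 1) := by
          by_contra h; exact hk (hX i k h)
        by_cases hkn : k.val = n - 1
        · have hz : (C * antiT X) k j = 0 := by
            rw [Matrix.mul_apply]
            apply Finset.sum_eq_zero
            intro m _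
            rw [hCc k m (Or.inr (Or.inl hkn)), zero_mul]
          rw [hz, mul_zero]
        · have hi0 : i.val = 0 := by tauto
          have hjn : j.val ≠ n - 1 := fun h => hhard ⟨hi0, h⟩
          have hz : (C * antiT X) k j = 0 := by
            rw [Matrix.mul_apply]
            apply Finset.sum_eq_zero
            intro m _
            by_cases hm : C k m = 0
            · rw [hm, zero_mul]
            · have hm0 : m.val ≠ 0 ∧ m.val ≠ n - 1 := by
                constructor <;> (intro h; exact hm (hCc k m (by tauto)))
              have hz2 : antiT X m j = 0 := by
                show X j.rev m.rev = 0
                apply hX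
                rintro (⟨h1, _⟩ | ⟨h2, _⟩)
                · rw [Fin.val_rev] at h1
                  have := j.isLt
                  omega
                · rw [Fin.val_rev] at h2
                  have := m.isLt
                  omega
              rw [hz2, mul_zero]
          rw [hz, mul_zero]
  rw [hL, hR]
end

section
/- Let B be the n×n matrix with B_{2,j} = 1 for 2 ≤ j ≤ n−2, B_{i,2} = 1 for 3 ≤ i ≤ n−2, B_{i,n-1} = −1 for 3 ≤ i ≤ n−1, B_{n-1,j} = −1 for 3 ≤ j ≤ n−2, and all other entries zero. Then the map h(X) = [X^τ, B] = X^τ B − B X^τ satisfies [h(X), X] = 0 for all X ∈ H_n, i.e., h is a commuting map, and h is linear. -/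
open Matrix

section Aux

variable {n : ℕ} {F : Type*} [Field F]

lemma antiT_add' (X Y : Matrix (Fin n) (Fin n) F) : antiT (X + Y) = antiT X + antiT Y := by
  ext i j; simp [antiT]

lemma antiT_smul' (c : F) (X : Matrix (Fin n) (Fin n) F) : antiT (c • X) = c • antiT X := by
  ext i j; simp [antiT]

lemma vmv_mul (a b : Fin n → F) (M : Matrix (Fin n) (Fin n) F) :
    vecMulVec a b * M = vecMulVec a (b ᵥ* M) := by
  ext i j
  simp [mul_apply, vecMulVec_apply, vecMul, dotProduct, Finset.mul_sum, mul_assoc]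

lemma mul_vmv (M : Matrix (Fin n) (Fin n) F) (a b : Fin n → F) :
    M * vecMulVec a b = vecMulVec (M *ᵥ a) b := by
  ext i j
  simp [mul_apply, vecMulVec_apply, mulVec, dotProduct, Finset.sum_mul, mul_assoc]

lemma vmv_mul_vmv (a b c d : Fin n → F) :
    vecMulVec a b * vecMulVec c d = (b ⬝ᵥ c) • vecMulVec a d := by
  ext i j
  simp only [mul_apply, vecMulVec_apply, Matrix.smul_apply, dotProduct, smul_eq_mul,
    Finset.sum_mul]
  rw [Finset.sum_congr rfl
    (fun k _ => show a i * b k * (c k * d j) = b k * c k * (a i * d j) by ring)]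

lemma antiT_vmv (a b : Fin n → F) :
    antiT (vecMulVec a b) = vecMulVec (fun i => b i.rev) (fun j => a j.rev) := by
  ext i j
  simp [antiT, vecMulVec_apply, mul_comm]

lemma sum_rev (f : Fin n → F) : ∑ i : Fin n, f i.rev = ∑ i, f i :=
  Fintype.sum_bijective Fin.rev Fin.rev_involutive.bijective _ _ (fun _ => rfl)

lemma sum_sum_rev (G : Fin n → Fin n → F) :
    (∑ m : Fin n, ∑ k : Fin n, G m k) = ∑ m : Fin n, ∑ k : Fin n, G m.rev k.rev := by
  rw [← sum_rev (fun m => ∑ k, G m k)]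
  exact Finset.sum_congr rfl fun m _ => (sum_rev (fun k => G m.rev k)).symm

lemma quad [CharZero F] (B : Matrix (Fin n) (Fin n) F)
    (hBt : ∀ i j : Fin n, B j.rev i.rev = - B i j) (w : Fin n → F) :
    ∑ m : Fin n, ∑ k : Fin n, w m.rev * B m k * w k = 0 := by
  have h2 : (∑ m : Fin n, ∑ k : Fin n, w m.rev * B m k * w k)
      = - ∑ m : Fin n, ∑ k : Fin n, w m.rev * B m k * w k := by
    calc (∑ m : Fin n, ∑ k : Fin n, w m.rev * B m k * w k)
        = ∑ m : Fin n, ∑ k : Fin n, w m.rev.rev * B m.rev k.rev * w k.rev :=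
          sum_sum_rev (fun m k => w m.rev * B m k * w k)
    _ = ∑ m : Fin n, ∑ k : Fin n, -(w k.rev * B k m * w m) := by
        refine Finset.sum_congr rfl fun m _ => Finset.sum_congr rfl fun k _ => ?_
        rw [Fin.rev_rev, hBt]; ring
    _ = - ∑ m : Fin n, ∑ k : Fin n, (w k.rev * B k m * w m) := by simp
    _ = - ∑ m : Fin n, ∑ k : Fin n, w m.rev * B m k * w k := by rw [Finset.sum_comm]
  have h3 : (2:F) * (∑ m : Fin n, ∑ k : Fin n, w m.rev * B m k * w k) = 0 := by
    linear_combination h2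
  exact (mul_eq_zero.mp h3).resolve_left two_ne_zero

lemma key [CharZero F] (B : Matrix (Fin n) (Fin n) F)
    (z l : Fin n) (hzl : z ≠ l) (hrev : z.rev = l)
    (u v : Fin n → F)
    (hBt : ∀ i j : Fin n, B j.rev i.rev = - B i j)
    (hrow : ∀ k, B l k = 0) (hcol : ∀ k, B k z = 0)
    (hu : u z = 0) (hv : v l = 0)
    (X : Matrix (Fin n) (Fin n) F)
    (hXd : X = vecMulVec (Pi.single z 1) u + vecMulVec v (Pi.single l 1)) :
    (antiT X * B - B * antiT X) * X = X * (antiT X * B - B * antiT X) := by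
  have hrevl : l.rev = z := by rw [← hrev, Fin.rev_rev]
  set s : Fin n → F := Pi.single z 1 with hs
  set t : Fin n → F := Pi.single l 1 with ht
  have hsrev : (fun j : Fin n => s j.rev) = t := by
    funext j
    by_cases hj : j = l
    · subst hj; rw [hrevl, hs, ht, Pi.single_eq_same, Pi.single_eq_same]
    · have : j.rev ≠ z := fun e => hj (by rw [← Fin.rev_rev j, e, hrev])
      rw [hs, ht, Pi.single_eq_of_ne this, Pi.single_eq_of_ne hj]
  have htrev : (fun j : Fin n => t j.rev) = s := by
    funext j
    by_cases hj : j = z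
    · subst hj; rw [hrev, hs, ht, Pi.single_eq_same, Pi.single_eq_same]
    · have : j.rev ≠ l := fun e => hj (by rw [← Fin.rev_rev j, e, hrevl])
      rw [hs, ht, Pi.single_eq_of_ne this, Pi.single_eq_of_ne hj]
  have hτ : antiT X = vecMulVec (fun i => u i.rev) t + vecMulVec s (fun j => v j.rev) := by
    rw [hXd, antiT_add', antiT_vmv, antiT_vmv, hsrev, htrev]
  have htB : t ᵥ* B = 0 := by
    funext j
    simp [ht, vecMul, dotProduct, Pi.single_apply, hrow]
  have hBs : B *ᵥ s = 0 := by
    funext i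
    simp [hs, mulVec, dotProduct, Pi.single_apply, hcol]
  have hA : antiT X * B - B * antiT X
      = vecMulVec s ((fun j => v j.rev) ᵥ* B) - vecMulVec (B *ᵥ fun i => u i.rev) t := by
    rw [hτ, add_mul, mul_add, vmv_mul, vmv_mul, mul_vmv, mul_vmv, htB, hBs]
    have e1 : vecMulVec (fun i : Fin n => u i.rev) (0 : Fin n → F) = 0 := by
      ext i j; simp [vecMulVec_apply]
    have e2 : vecMulVec (0 : Fin n → F) (fun j : Fin n => v j.rev) = 0 := by
      ext i j; simp [vecMulVec_apply]
    rw [e1, e2, zero_add, add_zero]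
  -- scalar facts
  have hds : ((fun j => v j.rev) ᵥ* B) ⬝ᵥ s = 0 := by
    simp [hs, dotProduct, Pi.single_apply, vecMul, hcol]
  have hts : t ⬝ᵥ s = 0 := by
    simp [hs, ht, dotProduct, Pi.single_apply, hzl, Ne.symm hzl]
  have htv : t ⬝ᵥ v = 0 := by
    simp [ht, dotProduct, Pi.single_apply, hv]
  have hus : u ⬝ᵥ s = 0 := by
    simp [hs, dotProduct, Pi.single_apply, hu]
  have htBu : t ⬝ᵥ (B *ᵥ fun i => u i.rev) = 0 := by
    simp [ht, dotProduct, mulVec, Pi.single_apply, hrow]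
  have hc1 : ((fun j => v j.rev) ᵥ* B) ⬝ᵥ v = 0 := by
    have hq := quad B hBt v
    calc ((fun j => v j.rev) ᵥ* B) ⬝ᵥ v
        = ∑ m : Fin n, ∑ k : Fin n, v m.rev * B m k * v k := by
          simp only [dotProduct, vecMul, Finset.sum_mul]
          rw [Finset.sum_comm]
    _ = 0 := hq
  have hc2 : u ⬝ᵥ (B *ᵥ fun i => u i.rev) = 0 := by
    have hq := quad B hBt (fun i => u i.rev)
    simp only [Fin.rev_rev] at hq
    calc u ⬝ᵥ (B *ᵥ fun i => u i.rev)
        = ∑ m : Fin n, ∑ k : Fin n, u m * B m k * u k.rev := by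
          simp [dotProduct, mulVec, Finset.mul_sum, mul_assoc]
    _ = 0 := hq
  have hL : (antiT X * B - B * antiT X) * X = 0 := by
    rw [hA, hXd, sub_mul, mul_add, mul_add,
      vmv_mul_vmv, vmv_mul_vmv, vmv_mul_vmv, vmv_mul_vmv,
      hds, hts, htv, hc1]
    simp
  have hR : X * (antiT X * B - B * antiT X) = 0 := by
    rw [hA, hXd, mul_sub, add_mul, add_mul,
      vmv_mul_vmv, vmv_mul_vmv, vmv_mul_vmv, vmv_mul_vmv,
      hus, hts, htBu, hc2]
    simp
  rw [hL, hR]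

end Aux

theorem stmt8 {n : ℕ} (hn : 4 ≤ n) {F : Type*} [Field F] [CharZero F]
    (B : Matrix (Fin n) (Fin n) F)
    (hB : ∀ i j : Fin n, B i j =
        if i.val = 1 ∧ 1 ≤ j.val ∧ j.val ≤ n - 3 then 1
        else if j.val = 1 ∧ 2 ≤ i.val ∧ i.val ≤ n - 3 then 1
        else if j.val = n - 2 ∧ 2 ≤ i.val ∧ i.val ≤ n - 2 then -1
        else if i.val = n - 2 ∧ 2 ≤ j.val ∧ j.val ≤ n - 3 then -1
        else 0)
    (h : Matrix (Fin n) (Fin n) F → Matrix (Fin n) (Fin n) F)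
    (hh : ∀ X, h X = antiT X * B - B * antiT X) :
    (∀ X, IsHeis X → h X * X = X * h X) ∧
    (∀ X Y, h (X + Y) = h X + h Y) ∧
    (∀ (c : F) (X), h (c • X) = c • h X) := by
  refine ⟨?_, ?_, ?_⟩
  · intro X hX
    obtain ⟨z, hzv⟩ : ∃ z : Fin n, z.val = 0 := ⟨⟨0, by omega⟩, rfl⟩
    obtain ⟨l, hlv⟩ : ∃ l : Fin n, l.val = n - 1 := ⟨⟨n - 1, by omega⟩, rfl⟩
    have hzl : z ≠ l := by
      intro e; rw [e] at hzv; omega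
    have hrev : z.rev = l := by
      apply Fin.ext; rw [Fin.val_rev]; omega
    have hBt : ∀ i j : Fin n, B j.rev i.rev = - B i j := by
      intro i j
      have hi := i.isLt
      have hj := j.isLt
      rw [hB j.rev i.rev, hB i j]
      simp only [Fin.val_rev]
      split_ifs <;> first | (exfalso; omega) | norm_num
    have hrow : ∀ k, B l k = 0 := by
      intro k
      have hk := k.isLt
      rw [hB]
      split_ifs <;> first | rfl | (exfalso; omega)
    have hcol : ∀ k, B k z = 0 := by
      intro k
      have hk := k.isLt
      rw [hB]
      split_ifs <;> first | rfl | (exfalso; omega)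
    have hu : X z z = 0 := by
      apply hX
      rintro (⟨h1, h2⟩ | ⟨h1, h2⟩) <;> omega
    have hXll : X l l = 0 := by
      apply hX
      rintro (⟨h1, h2⟩ | ⟨h1, h2⟩) <;> omega
    have hv : (fun i => if i = z then 0 else X i l) l = 0 := by
      simp only [Ne.symm hzl, if_neg (Ne.symm hzl)]
      exact hXll
    have hXd : X = vecMulVec (Pi.single z 1) (X z)
        + vecMulVec (fun i => if i = z then 0 else X i l) (Pi.single l 1) := by
      ext i j
      simp only [Matrix.add_apply, vecMulVec_apply, Pi.single_apply]
      by_cases hi : i = z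
      · subst hi
        simp
      · by_cases hj : j = l
        · subst hj
          simp [hi]
        · simp only [if_neg hi, zero_mul, if_neg hj, mul_zero, add_zero, zero_add]
          apply hX
          rintro (⟨h1, h2⟩ | ⟨h1, h2⟩)
          · exact hi (Fin.ext (by omega))
          · exact hj (Fin.ext (by omega))
    rw [hh]
    exact key B z l hzl hrev (X z) (fun i => if i = z then 0 else X i l)
      hBt hrow hcol hu hv X hXd
  · intro X Y
    rw [hh, hh, hh, antiT_add']
    noncomm_ring
  · intro c X
    rw [hh, hh, antiT_smul', smul_sub, Matrix.smul_mul, Matrix.mul_smul]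
end
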